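/- Weight adaptation to a right-hand discontinuity (Proposition): let r ≥ 2, t = 2r−1, 1 ≤ l₀ ≤ r−1, L ≥ 0, and 0 < m ≤ M₀. There exist constants M > 0 and h₀ > 0, depending only on r, l₀, L, m, M₀, such that for every 0 < h < h₀, every x₀ ∈ ℝ, every integer j, and every f : ℝ → ℝ satisfying m ≤ |f(x_{j+l₀}) − f(x_{j+l₀−1})| ≤ M₀ and |f(x_{j+ξ}) − f(x_{j+ξ−1})| ≤ L·h for all ξ ≠ l₀ with −r+1 ≤ ξ ≤ r−1, the nonlinear weights satisfy |ω_k − C^{r+l₀-1}_{l₀-1,k}| ≤ M·h^{t} for 0 ≤ k ≤ l₀−1, and 0 ≤ ω_k ≤ M·h^{t} for l₀ ≤ k ≤ r−1. -/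

import Mathlib

/-- The node `x_m = x₀ + m·h`. -/
noncomputable def nd (h x₀ : ℝ) (m : ℤ) : ℝ := x₀ + (m : ℝ) * h

/-- Value at the midpoint `x₀ + (j - 1/2)·h` of the Lagrange interpolant of `f`
at the `a+1` equally spaced nodes `x_{j+b-a}, …, x_{j+b}` where `x_m = x₀ + m·h`. -/
noncomputable def Pval (h x₀ : ℝ) (j a b : ℤ) (f : ℝ → ℝ) : ℝ :=
  (Lagrange.interpolate (Finset.Icc (j + b - a) (j + b)) (fun m : ℤ => x₀ + (m : ℝ) * h)
    (fun m : ℤ => f (x₀ + (m : ℝ) * h))).eval (x₀ + ((j : ℝ) - 1 / 2) * h)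

/-- The classical optimal weights `C^{2r-1}_{r-1,k} = 2^{-(2r-1)} · C(2r, 2k+1)`. -/
noncomputable def Copt (r k : ℕ) : ℝ :=
  (1 / 2 ^ (2 * r - 1)) * (Nat.choose (2 * r) (2 * k + 1) : ℝ)

/-- The general optimal weights `C^{r+l-1}_{l-1,k}`, for `1 ≤ l ≤ r` and `0 ≤ k ≤ l-1`. -/
noncomputable def C1 (r l k : ℕ) : ℝ :=
  (1 / 2 ^ (2 * l)) * (((r : ℝ) + (l : ℝ)) / (l : ℝ)) *
    (((l : ℝ) - (k : ℝ)) / ((r : ℝ) - (k : ℝ))) *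
    (Nat.choose l k : ℝ) * ((Nat.choose r k : ℝ))⁻¹ * (Nat.choose (2 * l) l : ℝ) *
    ((Nat.choose (l + r) r : ℝ))⁻¹ * (Nat.choose (2 * r) (2 * k + 1) : ℝ)

/-- The smoothness indicators `J_ξ = |f(x_{j+ξ}) − f(x_{j+ξ-1})|^{2t}` with `t = 2r-1`. -/
noncomputable def Jf (h x₀ : ℝ) (j : ℤ) (r : ℕ) (f : ℝ → ℝ) (ξ : ℤ) : ℝ :=
  |f (nd h x₀ (j + ξ)) - f (nd h x₀ (j + ξ - 1))| ^ (2 * (2 * r - 1))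

/-- The nonlinear weight numerators
`α_k = C^{2r-1}_{r-1,k} + h^{-(2r-1)}·(Σ_{l=k+1}^{r-1} C^{r+l-1}_{l-1,k} J_l
  + Σ_{l=0}^{k-1} C^{2r-l-2}_{r-1,k} J_{l-r+1})`,
where the reflected weight `C^{2r-l-2}_{r-1,k}` equals `C1 r (r-l-1) (r-1-k)`. -/
noncomputable def alphaW (h x₀ : ℝ) (j : ℤ) (r : ℕ) (f : ℝ → ℝ) (k : ℕ) : ℝ :=
  Copt r k + (h ^ (2 * r - 1))⁻¹ *
    ((∑ l ∈ Finset.Icc (k + 1) (r - 1), C1 r l k * Jf h x₀ j r f (l : ℤ)) +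
      ∑ l ∈ Finset.range k, C1 r (r - l - 1) (r - 1 - k) * Jf h x₀ j r f ((l : ℤ) - (r : ℤ) + 1))

/-- The nonlinear weights `ω_k = α_k / (α_0 + ⋯ + α_{r-1})`. -/
noncomputable def omegaW (h x₀ : ℝ) (j : ℤ) (r : ℕ) (f : ℝ → ℝ) (k : ℕ) : ℝ :=
  alphaW h x₀ j r f k / ∑ i ∈ Finset.range r, alphaW h x₀ j r f i

section AuxWENO
open Nat


lemma factne (n : ℕ) : ((n ! : ℝ)) ≠ 0 := by
  exact_mod_cast (Nat.factorial_pos n).ne'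

lemma lemA (k a d : ℕ) :
    ((k+1+a : ℝ)*(2*(k+1+a)+1)) * (Nat.choose (a+d+1) d) * (Nat.choose (2*(k+a+d+2)) (2*k+1))
      - 2*((k+1+a : ℝ)+(k+a+d+2))*(d+1) * (Nat.choose (a+d+1) (d+1)) *
        (Nat.choose (2*(k+a+d+2)) (2*k+1))
    = (k : ℝ)*(2*k+1) * (Nat.choose (a+d+1) d) * (Nat.choose (2*(k+a+d+2)) (2*k+1))
      - ((k : ℝ)+1)*(2*k+3) * (Nat.choose (a+d) d) * (Nat.choose (2*(k+a+d+2)) (2*k+3)) := by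
  rw [Nat.cast_choose ℝ (show d ≤ a+d+1 by omega),
      Nat.cast_choose ℝ (show d+1 ≤ a+d+1 by omega),
      Nat.cast_choose ℝ (show d ≤ a+d by omega),
      Nat.cast_choose ℝ (show 2*k+1 ≤ 2*(k+a+d+2) by omega),
      Nat.cast_choose ℝ (show 2*k+3 ≤ 2*(k+a+d+2) by omega),
      show a+d+1-d = a+1 by omega, show a+d+1-(d+1) = a by omega,
      show a+d-d = a by omega,
      show 2*(k+a+d+2)-(2*k+1) = 2*a+2*d+3 by omega,
      show 2*(k+a+d+2)-(2*k+3) = 2*a+2*d+1 by omega,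
      show (a+d+1)! = (a+d+1)*(a+d)! by rw [Nat.factorial_succ],
      show (a+1)! = (a+1)*(a)! by rw [Nat.factorial_succ],
      show (d+1)! = (d+1)*(d)! by rw [Nat.factorial_succ],
      show (2*k+3)! = (2*k+3)*((2*k+2)*(2*k+1)!) by
        rw [show 2*k+3 = (2*k+2)+1 by omega, Nat.factorial_succ,
            show 2*k+2 = (2*k+1)+1 by omega, Nat.factorial_succ],
      show (2*a+2*d+3)! = (2*a+2*d+3)*((2*a+2*d+2)*(2*a+2*d+1)!) by
        rw [show 2*a+2*d+3 = (2*a+2*d+2)+1 by omega, Nat.factorial_succ,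
            show 2*a+2*d+2 = (2*a+2*d+1)+1 by omega, Nat.factorial_succ]]
  have h1 := factne a
  have h2 := factne d
  have h3 := factne (a+d)
  have h4 := factne (2*k+1)
  have h5 := factne (2*a+2*d+1)
  push_cast
  field_simp
  ring

noncomputable def C1' (r l k : ℕ) : ℝ :=
  (1 / 2 ^ (2 * l)) * (((r : ℝ) + (l : ℝ)) / (l : ℝ)) *
    (((l : ℝ) - (k : ℝ)) / ((r : ℝ) - (k : ℝ))) *
    (Nat.choose l k : ℝ) * ((Nat.choose r k : ℝ))⁻¹ * (Nat.choose (2 * l) l : ℝ) *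
    ((Nat.choose (l + r) r : ℝ))⁻¹ * (Nat.choose (2 * r) (2 * k + 1) : ℝ)

set_option maxHeartbeats 1000000 in
lemma C1'_eq (k a d : ℕ) :
    C1' (k+1+a+d) (k+1+a) k
      = ((2*(k+1+a))! : ℝ) * (d ! : ℝ) / (2^(2*(k+1+a)) * (k+1+a : ℝ) * ((2*(k+a)+d+1)! : ℝ))
        * (Nat.choose (a+d) d) * (Nat.choose (2*(k+1+a+d)) (2*k+1)) := by
  rw [C1',
      Nat.cast_choose ℝ (show k ≤ k+1+a by omega),
      Nat.cast_choose ℝ (show k ≤ k+1+a+d by omega),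
      Nat.cast_choose ℝ (show (k+1+a) ≤ 2*(k+1+a) by omega),
      Nat.cast_choose ℝ (show (k+1+a+d) ≤ (k+1+a)+(k+1+a+d) by omega),
      Nat.cast_choose ℝ (show d ≤ a+d by omega),
      show (k+1+a) - k = a+1 by omega,
      show (k+1+a+d) - k = a+d+1 by omega,
      show 2*(k+1+a) - (k+1+a) = k+1+a by omega,
      show (k+1+a)+(k+1+a+d) - (k+1+a+d) = k+1+a by omega,
      show a+d-d = a by omega,
      show (a+1)! = (a+1)*(a)! by rw [Nat.factorial_succ],
      show (a+d+1)! = (a+d+1)*(a+d)! by rw [Nat.factorial_succ],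
      show ((k+1+a)+(k+1+a+d))! = (2*(k+a)+d+2)*(2*(k+a)+d+1)! by
        rw [show (k+1+a)+(k+1+a+d) = (2*(k+a)+d+1)+1 by omega, Nat.factorial_succ]]
  have h1 := factne a
  have h2 := factne d
  have h3 := factne (a+d)
  have h4 := factne k
  have h5 := factne (k+1+a)
  have h6 := factne (k+1+a+d)
  have h7 := factne (2*(k+a)+d+1)
  have h8 := factne (2*(k+1+a))
  have h9 : (2:ℝ)^(2*(k+1+a)) ≠ 0 := by positivity
  have e1 : ((k+1+a : ℕ):ℝ) - (k:ℝ) = (a:ℝ)+1 := by push_cast; ring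
  have e2 : ((k+1+a+d : ℕ):ℝ) - (k:ℝ) = (a:ℝ)+(d:ℝ)+1 := by push_cast; ring
  rw [e1, e2]
  have h10 : ((k+1+a : ℕ):ℝ) ≠ 0 := by push_cast; positivity
  have h11 : (a:ℝ)+1 ≠ 0 := by positivity
  have h12 : (a:ℝ)+(d:ℝ)+1 ≠ 0 := by positivity
  field_simp
  push_cast
  ring

noncomputable def Ssum (r l : ℕ) : ℝ :=
  ∑ k ∈ Finset.range l, (Nat.choose (r-1-k) (r-l) : ℝ) * (Nat.choose (2*r) (2*k+1) : ℝ)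

lemma lemB (r l : ℕ) (hl : 1 ≤ l) (hlr : l+1 ≤ r) :
    (l:ℝ)*(2*(l:ℝ)+1) * Ssum r (l+1) = 2*((l:ℝ)+(r:ℝ))*(((r-l : ℕ)):ℝ) * Ssum r l := by
  have key : ∀ k ∈ Finset.range (l+1),
      (l:ℝ)*(2*(l:ℝ)+1) * ((Nat.choose (r-1-k) (r-(l+1)) : ℝ) * (Nat.choose (2*r) (2*k+1) : ℝ))
      - 2*((l:ℝ)+(r:ℝ))*(((r-l : ℕ)):ℝ) *
          ((Nat.choose (r-1-k) (r-l) : ℝ) * (Nat.choose (2*r) (2*k+1) : ℝ))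
      = (fun (k : ℕ) => (k:ℝ)*(2*(k:ℝ)+1) * (Nat.choose (r-1-k) (r-(l+1)) : ℝ)
          * (Nat.choose (2*r) (2*k+1) : ℝ)) k
        - (fun (k : ℕ) => (k:ℝ)*(2*(k:ℝ)+1) * (Nat.choose (r-1-k) (r-(l+1)) : ℝ)
          * (Nat.choose (2*r) (2*k+1) : ℝ)) (k+1) := by
    intro k hk
    simp only [Finset.mem_range] at hk
    rcases Nat.lt_or_ge k l with hkl | hkl
    · -- k ≤ l-1
      obtain ⟨a, rfl⟩ : ∃ a, l = k+1+a := ⟨l-1-k, by omega⟩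
      obtain ⟨d, rfl⟩ : ∃ d, r = k+a+d+2 := ⟨r-(k+1+a)-1, by omega⟩
      simp only []
      rw [show k+a+d+2-1-k = a+d+1 by omega,
          show k+a+d+2-(k+1+a+1) = d by omega,
          show k+a+d+2-(k+1+a) = d+1 by omega,
          show k+a+d+2-1-(k+1) = a+d by omega,
          show 2*(k+1)+1 = 2*k+3 by omega]
      push_cast
      linear_combination lemA k a d
    · -- k = l
      have hk' : k = l := by omega
      subst hk'
      simp only []
      rw [show r-1-k = r-k-1 by omega]
      have h0 : (Nat.choose (r-k-1) (r-k) : ℝ) = 0 := by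
        rw [Nat.choose_eq_zero_of_lt (by omega)]; norm_cast
      rw [h0]
      rcases Nat.lt_or_ge (2*k+3) (2*r) with h2 | h2
      · have h1 : (Nat.choose (r-1-(k+1)) (r-(k+1)) : ℝ) = 0 := by
          rw [Nat.choose_eq_zero_of_lt (by omega)]; norm_cast
        rw [h1]; ring
      · have h1 : (Nat.choose (2*r) (2*(k+1)+1) : ℝ) = 0 := by
          rw [Nat.choose_eq_zero_of_lt (by omega)]; norm_cast
        rw [h1]; ring
  have tel := Finset.sum_range_sub' (fun (k : ℕ) => (k:ℝ)*(2*(k:ℝ)+1)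
      * (Nat.choose (r-1-k) (r-(l+1)) : ℝ) * (Nat.choose (2*r) (2*k+1) : ℝ)) (l+1)
  have hsum := Finset.sum_congr rfl key
  rw [Finset.sum_sub_distrib] at hsum
  rw [tel] at hsum
  have hG0 : ((0:ℕ):ℝ)*(2*((0:ℕ):ℝ)+1) * (Nat.choose (r-1-0) (r-(l+1)) : ℝ)
      * (Nat.choose (2*r) (2*0+1) : ℝ) = 0 := by norm_num
  have hGl : (((l+1:ℕ)):ℝ)*(2*((l+1:ℕ):ℝ)+1) * (Nat.choose (r-1-(l+1)) (r-(l+1)) : ℝ)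
      * (Nat.choose (2*r) (2*(l+1)+1) : ℝ) = 0 := by
    rcases Nat.lt_or_ge (2*r) (2*(l+1)+1) with h2 | h2
    · rw [Nat.choose_eq_zero_of_lt h2]; norm_num
    · rw [Nat.choose_eq_zero_of_lt (show r-1-(l+1) < r-(l+1) by omega)]; norm_num
  rw [hG0, hGl] at hsum
  rw [← Finset.mul_sum, ← Finset.mul_sum] at hsum
  have hlast : Ssum r (l+1) + 0 = ∑ k ∈ Finset.range (l+1),
      (Nat.choose (r-1-k) (r-(l+1)) : ℝ) * (Nat.choose (2*r) (2*k+1) : ℝ) := by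
    rw [Ssum, add_zero]
  have hS : ∑ k ∈ Finset.range (l+1),
      (Nat.choose (r-1-k) (r-l) : ℝ) * (Nat.choose (2*r) (2*k+1) : ℝ) = Ssum r l := by
    rw [Finset.sum_range_succ, Ssum, Nat.choose_eq_zero_of_lt (by omega : r-1-l < r-l)]
    norm_num
  rw [hS] at hsum
  rw [Ssum]
  linarith [hsum]

lemma lemC (r : ℕ) : ∀ l : ℕ, 1 ≤ l → l ≤ r →
    Ssum r l = 2^(2*l) * (l:ℝ) * ((l+r-1)! : ℝ) / (((2*l)! : ℝ) * (((r-l))! : ℝ)) := by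
  intro l
  induction l with
  | zero => omega
  | succ n ih =>
    intro _ hlr
    rcases Nat.eq_zero_or_pos n with hn | hn
    · subst hn
      obtain ⟨e, rfl⟩ : ∃ e, r = 1+e := ⟨r-1, by omega⟩
      rw [Ssum, Finset.sum_range_one]
      rw [show 1+e-1-0 = e by omega, show 1+e-1 = e by omega, Nat.choose_self,
          show 2*0+1 = 1 by omega, Nat.choose_one_right,
          show 0+1+(1+e)-1 = e+1 by omega, Nat.factorial_succ]
      have := factne e
      push_cast
      field_simp
      ring
    · obtain ⟨p, rfl⟩ : ∃ p, n = p+1 := ⟨n-1, by omega⟩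
      obtain ⟨e, rfl⟩ : ∃ e, r = p+2+e := ⟨r-(p+2), by omega⟩
      have hB := lemB (p+2+e) (p+1) (by omega) (by omega)
      have hI := ih (by omega) (by omega)
      rw [hI] at hB
      rw [show p+1+(p+2+e)-1 = 2*p+2+e by omega, show p+2+e-(p+1) = e+1 by omega] at hB
      rw [show p+1+1+(p+2+e)-1 = 2*p+3+e by omega, show p+2+e-(p+1+1) = e by omega]
      have h1 := factne e
      have h2 := factne (2*p+2+e)
      have h3 := factne (2*(p+1))
      have e1 : ((2*(p+1+1))! : ℝ) = (2*p+4)*((2*p+3)*((2*(p+1))!)) := by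
        rw [show 2*(p+1+1) = (2*p+3)+1 by omega, Nat.factorial_succ,
            show 2*p+3 = (2*p+2)+1 by omega, Nat.factorial_succ,
            show 2*p+2 = 2*(p+1) by omega]
        push_cast; ring
      have e2 : ((2*p+3+e)! : ℝ) = (2*p+3+e)*((2*p+2+e)!) := by
        rw [show 2*p+3+e = (2*p+2+e)+1 by omega, Nat.factorial_succ]
        push_cast; ring
      have e3 : ((e+1)! : ℝ) = (e+1)*(e !) := by
        rw [Nat.factorial_succ]; push_cast; ring
      rw [e1, e2]
      rw [e3] at hB
      have hc : ((p:ℝ)+1)*(2*((p:ℝ)+1)+1) ≠ 0 := by positivity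
      have hS : Ssum (p+2+e) (p+1+1)
          = 2*((p+1:ℝ)+((p:ℝ)+2+e))*((e:ℝ)+1) *
              (2^(2*(p+1)) * ((p:ℝ)+1) * ((2*p+2+e)! : ℝ)
                / (((2*(p+1))! : ℝ) * ((e+1:ℝ)*(e ! : ℝ))))
            / (((p:ℝ)+1)*(2*((p:ℝ)+1)+1)) := by
      -- derive from hB
        rw [eq_div_iff hc]
        push_cast at hB ⊢
        linarith [hB]
      rw [hS]
      have he1 : (e:ℝ)+1 ≠ 0 := by positivity
      have hp1 : (p:ℝ)+1 ≠ 0 := by positivity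
      have h2p : (2:ℝ)^(2*(p+1)) ≠ 0 := by positivity
      push_cast
      field_simp
      ring

lemma lemD (r l : ℕ) (h1 : 1 ≤ l) (h2 : l ≤ r) :
    ∑ k ∈ Finset.range l, C1' r l k = 1 := by
  have key : ∀ k ∈ Finset.range l,
      C1' r l k = ((2*l)! : ℝ) * (((r-l))! : ℝ) / (2^(2*l) * (l:ℝ) * (((l+r-1))! : ℝ))
        * ((Nat.choose (r-1-k) (r-l) : ℝ) * (Nat.choose (2*r) (2*k+1) : ℝ)) := by
    intro k hk
    simp only [Finset.mem_range] at hk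
    obtain ⟨a, rfl⟩ : ∃ a, l = k+1+a := ⟨l-1-k, by omega⟩
    obtain ⟨d, rfl⟩ : ∃ d, r = k+1+a+d := ⟨r-(k+1+a), by omega⟩
    rw [C1'_eq k a d, show k+1+a+d-1-k = a+d by omega,
        show k+1+a+d-(k+1+a) = d by omega,
        show k+1+a+(k+1+a+d)-1 = 2*(k+a)+d+1 by omega]
    push_cast
    ring
  rw [Finset.sum_congr rfl key, ← Finset.mul_sum, ← Ssum, lemC r l h1 h2]
  have f1 := factne (2*l)
  have f2 := factne (r-l)
  have f3 := factne (l+r-1)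
  have f4 : (2:ℝ)^(2*l) ≠ 0 := by positivity
  have f5 : (l:ℝ) ≠ 0 := by
    simp only [ne_eq, Nat.cast_eq_zero]; omega
  field_simp

lemma C1'_nonneg (r l k : ℕ) (hkl : k ≤ l) (hlr : l ≤ r) : 0 ≤ C1' r l k := by
  have h3 : (0:ℝ) ≤ ((l:ℝ) - k)/((r:ℝ) - k) :=
    div_nonneg (sub_nonneg.2 (by exact_mod_cast hkl))
      (sub_nonneg.2 (by exact_mod_cast hkl.trans hlr))
  rw [C1']
  have base : 0 ≤ (1 / 2 ^ (2 * l) : ℝ) * (((r : ℝ) + (l : ℝ)) / (l : ℝ)) := by positivity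
  refine mul_nonneg (mul_nonneg (mul_nonneg (mul_nonneg (mul_nonneg
    (mul_nonneg base h3) (by positivity)) (by positivity)) (by positivity))
    (by positivity)) (by positivity)

end AuxWENO

section AuxWENO2
open Nat
lemma C1_eq_C1' : C1 = C1' := rfl

lemma C1_sum (r l : ℕ) (h1 : 1 ≤ l) (h2 : l ≤ r) :
    ∑ k ∈ Finset.range l, C1 r l k = 1 := by
  rw [C1_eq_C1']; exact lemD r l h1 h2

lemma C1_nonneg (r l k : ℕ) (hkl : k ≤ l) (hlr : l ≤ r) : 0 ≤ C1 r l k := by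
  rw [C1_eq_C1']; exact C1'_nonneg r l k hkl hlr

end AuxWENO2

set_option maxHeartbeats 1000000 in
/-- Weight adaptation to a right-hand discontinuity at `[x_{j+l₀-1}, x_{j+l₀}]`:
the weights tend to the `(r+l₀-1, l₀-1)`-optimal weights up to `O(h^{2r-1})`, and the remaining
weights are `O(h^{2r-1})`. -/
theorem weights_right_discontinuity (r : ℕ) (hr : 2 ≤ r) (l₀ : ℕ) (hl₀1 : 1 ≤ l₀)
    (hl₀2 : l₀ ≤ r - 1) (L m M₀ : ℝ) (hL : 0 ≤ L) (hm : 0 < m) (hmM : m ≤ M₀) :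
    ∃ M > 0, ∃ h₀ > 0, ∀ h : ℝ, 0 < h → h < h₀ → ∀ x₀ : ℝ, ∀ j : ℤ, ∀ f : ℝ → ℝ,
      m ≤ |f (nd h x₀ (j + l₀)) - f (nd h x₀ (j + l₀ - 1))| →
      |f (nd h x₀ (j + l₀)) - f (nd h x₀ (j + l₀ - 1))| ≤ M₀ →
      (∀ ξ : ℤ, ξ ≠ (l₀ : ℤ) → -(r : ℤ) + 1 ≤ ξ → ξ ≤ (r : ℤ) - 1 →
        |f (nd h x₀ (j + ξ)) - f (nd h x₀ (j + ξ - 1))| ≤ L * h) →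
      (∀ k : ℕ, k ≤ l₀ - 1 →
        |omegaW h x₀ j r f k - C1 r l₀ k| ≤ M * h ^ (2 * r - 1)) ∧
      (∀ k : ℕ, l₀ ≤ k → k ≤ r - 1 →
        0 ≤ omegaW h x₀ j r f k ∧ omegaW h x₀ j r f k ≤ M * h ^ (2 * r - 1)) := by
  -- abbreviations for constants
  set t : ℕ := 2 * r - 1 with ht
  set T : ℕ := 2 * (2 * r - 1) with hT
  set Cb : ℝ := (∑ l ∈ Finset.range (r+1), ∑ k ∈ Finset.range (r+1), |C1 r l k|) + 1 with hCb
  set CoptB : ℝ := ∑ k ∈ Finset.range r, Copt r k with hCoptB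
  set K₀ : ℝ := CoptB + 2 * (r:ℝ) * Cb * L ^ T with hK₀
  clear_value t T Cb CoptB K₀
  have hCb1 : (1:ℝ) ≤ Cb := by
    have : 0 ≤ ∑ l ∈ Finset.range (r+1), ∑ k ∈ Finset.range (r+1), |C1 r l k| :=
      Finset.sum_nonneg fun _ _ => Finset.sum_nonneg fun _ _ => abs_nonneg _
    simp only [hCb]; linarith
  have hCbpos : (0:ℝ) < Cb := lt_of_lt_of_le one_pos hCb1
  have hC1le : ∀ l k : ℕ, l ≤ r → k ≤ r → C1 r l k ≤ Cb := by
    intro l k hl hk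
    have h1 : |C1 r l k| ≤ ∑ k' ∈ Finset.range (r+1), |C1 r l k'| := by
      apply Finset.single_le_sum (f := fun k' => |C1 r l k'|) (fun _ _ => abs_nonneg _)
      exact Finset.mem_range.2 (Nat.lt_succ_of_le hk)
    have h2 : ∑ k' ∈ Finset.range (r+1), |C1 r l k'|
        ≤ ∑ l' ∈ Finset.range (r+1), ∑ k' ∈ Finset.range (r+1), |C1 r l' k'| := by
      apply Finset.single_le_sum (f := fun l' => ∑ k' ∈ Finset.range (r+1), |C1 r l' k'|)
        (fun _ _ => Finset.sum_nonneg fun _ _ => abs_nonneg _)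
      exact Finset.mem_range.2 (Nat.lt_succ_of_le hl)
    have h3 := le_abs_self (C1 r l k)
    simp only [hCb]; linarith
  have hCoptnn : ∀ k, 0 ≤ Copt r k := by
    intro k; rw [Copt]; positivity
  have hCoptBnn : 0 ≤ CoptB := by
    rw [hCoptB]; exact Finset.sum_nonneg fun _ _ => hCoptnn _
  have hCoptle : ∀ i, i < r → Copt r i ≤ CoptB := by
    intro i hi
    rw [hCoptB]
    exact Finset.single_le_sum (fun k _ => hCoptnn k) (Finset.mem_range.2 hi)
  have hK₀nn : 0 ≤ K₀ := by
    have : 0 ≤ 2 * (r:ℝ) * Cb * L ^ T := by positivity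
    simp only [hK₀]; linarith
  have hmT : (0:ℝ) < m ^ T := by positivity
  have hrnn : (0:ℝ) ≤ (r:ℝ) := Nat.cast_nonneg r
  have hnum0 : 0 ≤ K₀ + Cb * (r:ℝ) * ((r:ℝ) * K₀) :=
    add_nonneg hK₀nn (mul_nonneg (mul_nonneg hCbpos.le hrnn) (mul_nonneg hrnn hK₀nn))
  refine ⟨(K₀ + Cb * (r:ℝ) * ((r:ℝ) * K₀)) / m ^ T + 1,
    by linarith [div_nonneg hnum0 hmT.le], 1, one_pos, ?_⟩
  set M : ℝ := (K₀ + Cb * (r:ℝ) * ((r:ℝ) * K₀)) / m ^ T + 1 with hM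
  clear_value M
  intro h hh0 hh1 x₀ j f hlo hhi hsm
  have hht : (0:ℝ) < h ^ t := by positivity
  have hhT : (0:ℝ) < h ^ T := by positivity
  have hexp : (h ^ t)⁻¹ * h ^ T = h ^ t := by
    rw [hT, two_mul, ← ht, pow_add]
    field_simp
  have hhtle1 : h ^ t ≤ 1 := pow_le_one₀ hh0.le hh1.le
  -- J and A
  set J : ℝ := Jf h x₀ j r f (l₀ : ℤ) with hJ
  set A : ℝ := (h ^ t)⁻¹ * J with hA
  clear_value A
  clear_value J
  have hJlo : m ^ T ≤ J := by
    rw [hJ, Jf, hT]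
    exact pow_le_pow_left₀ hm.le hlo _
  have hApos : 0 < A := by
    have : 0 < J := lt_of_lt_of_le hmT hJlo
    rw [hA]; positivity
  have hAlow : m ^ T * (h ^ t)⁻¹ ≤ A := by
    rw [hA, mul_comm]
    exact mul_le_mul_of_nonneg_left hJlo (by positivity)
  -- J bounds away from l₀
  have hJnn : ∀ ξ : ℤ, 0 ≤ Jf h x₀ j r f ξ := by
    intro ξ; rw [Jf]; positivity
  have hJle : ∀ ξ : ℤ, ξ ≠ (l₀ : ℤ) → -(r : ℤ) + 1 ≤ ξ → ξ ≤ (r : ℤ) - 1 →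
      Jf h x₀ j r f ξ ≤ (L * h) ^ T := by
    intro ξ h1 h2 h3
    rw [Jf, hT]
    exact pow_le_pow_left₀ (abs_nonneg _) (hsm ξ h1 h2 h3) _
  -- bound on first-type sums
  have hbound1 : ∀ (i : ℕ) (s : Finset ℕ), i < r → s ⊆ Finset.Icc (i+1) (r-1) →
      (l₀ ∉ s) →
      0 ≤ ∑ l ∈ s, C1 r l i * Jf h x₀ j r f (l : ℤ) ∧
      ∑ l ∈ s, C1 r l i * Jf h x₀ j r f (l : ℤ) ≤ (r:ℝ) * (Cb * (L * h) ^ T) := by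
    intro i s hi hsub hnot
    have hterm : ∀ l ∈ s, 0 ≤ C1 r l i * Jf h x₀ j r f (l : ℤ) ∧
        C1 r l i * Jf h x₀ j r f (l : ℤ) ≤ Cb * (L * h) ^ T := by
      intro l hl
      have hmem := Finset.mem_Icc.1 (hsub hl)
      have hC1nn : 0 ≤ C1 r l i := C1_nonneg r l i (by omega) (by omega)
      have hC1b : C1 r l i ≤ Cb := hC1le l i (by omega) (by omega)
      have hJb : Jf h x₀ j r f (l : ℤ) ≤ (L * h) ^ T := by
        refine hJle (l : ℤ) ?_ (by omega) (by omega)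
        intro hceq
        apply hnot
        have hle : l = l₀ := by exact_mod_cast hceq
        rwa [hle] at hl
      constructor
      · exact mul_nonneg hC1nn (hJnn _)
      · exact mul_le_mul hC1b hJb (hJnn _) hCbpos.le
    constructor
    · exact Finset.sum_nonneg fun l hl => (hterm l hl).1
    · calc ∑ l ∈ s, C1 r l i * Jf h x₀ j r f (l : ℤ)
          ≤ ∑ _l ∈ s, Cb * (L * h) ^ T := Finset.sum_le_sum fun l hl => (hterm l hl).2
        _ = (s.card : ℝ) * (Cb * (L * h) ^ T) := by
            rw [Finset.sum_const, nsmul_eq_mul]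
        _ ≤ (r:ℝ) * (Cb * (L * h) ^ T) := by
            have hcard : s.card ≤ r := by
              have := Finset.card_le_card hsub
              rw [Nat.card_Icc] at this
              omega
            have : (s.card : ℝ) ≤ (r : ℝ) := by exact_mod_cast hcard
            exact mul_le_mul_of_nonneg_right this (by positivity)
  -- bound on second-type sums
  have hbound2 : ∀ (i : ℕ), i < r →
      0 ≤ ∑ l ∈ Finset.range i, C1 r (r-l-1) (r-1-i) * Jf h x₀ j r f ((l:ℤ) - (r:ℤ) + 1) ∧
      ∑ l ∈ Finset.range i, C1 r (r-l-1) (r-1-i) * Jf h x₀ j r f ((l:ℤ) - (r:ℤ) + 1)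
        ≤ (r:ℝ) * (Cb * (L * h) ^ T) := by
    intro i hi
    have hterm : ∀ l ∈ Finset.range i,
        0 ≤ C1 r (r-l-1) (r-1-i) * Jf h x₀ j r f ((l:ℤ) - (r:ℤ) + 1) ∧
        C1 r (r-l-1) (r-1-i) * Jf h x₀ j r f ((l:ℤ) - (r:ℤ) + 1) ≤ Cb * (L * h) ^ T := by
      intro l hl
      have hlmem := Finset.mem_range.1 hl
      have hC1nn : 0 ≤ C1 r (r-l-1) (r-1-i) := C1_nonneg r _ _ (by omega) (by omega)
      have hC1b : C1 r (r-l-1) (r-1-i) ≤ Cb := hC1le _ _ (by omega) (by omega)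
      have hJb : Jf h x₀ j r f ((l:ℤ) - (r:ℤ) + 1) ≤ (L * h) ^ T := by
        refine hJle _ (by omega) (by omega) (by omega)
      constructor
      · exact mul_nonneg hC1nn (hJnn _)
      · exact mul_le_mul hC1b hJb (hJnn _) hCbpos.le
    constructor
    · exact Finset.sum_nonneg fun l hl => (hterm l hl).1
    · calc ∑ l ∈ Finset.range i, C1 r (r-l-1) (r-1-i) * Jf h x₀ j r f ((l:ℤ) - (r:ℤ) + 1)
          ≤ ∑ _l ∈ Finset.range i, Cb * (L * h) ^ T :=
            Finset.sum_le_sum fun l hl => (hterm l hl).2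
        _ = (i : ℝ) * (Cb * (L * h) ^ T) := by
            rw [Finset.sum_const, nsmul_eq_mul, Finset.card_range]
        _ ≤ (r:ℝ) * (Cb * (L * h) ^ T) := by
            have : (i : ℝ) ≤ (r : ℝ) := by exact_mod_cast hi.le
            exact mul_le_mul_of_nonneg_right this (by positivity)
  -- the splitting
  set c : ℕ → ℝ := fun i => C1 r l₀ i with hc
  set Bf : ℕ → ℝ := fun i => Copt r i + (h ^ t)⁻¹ *
      ((∑ l ∈ (Finset.Icc (i+1) (r-1)).erase l₀, C1 r l i * Jf h x₀ j r f (l:ℤ)) +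
       ∑ l ∈ Finset.range i, C1 r (r-l-1) (r-1-i) * Jf h x₀ j r f ((l:ℤ)-(r:ℤ)+1)) with hBf
  clear_value c Bf
  have hsplit : ∀ i, i < r →
      alphaW h x₀ j r f i = (if i < l₀ then c i else 0) * A + Bf i := by
    intro i hi
    rcases Nat.lt_or_ge i l₀ with hil | hil
    · rw [if_pos hil]
      have hmem : l₀ ∈ Finset.Icc (i+1) (r-1) := Finset.mem_Icc.2 ⟨by omega, hl₀2⟩
      have := Finset.add_sum_erase _ (fun l => C1 r l i * Jf h x₀ j r f (l:ℤ)) hmem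
      rw [alphaW, ← this]
      simp only [hBf, hA, hJ, hc, ← ht]
      ring
    · rw [if_neg (by omega)]
      have hnm : l₀ ∉ Finset.Icc (i+1) (r-1) := by
        simp only [Finset.mem_Icc]; omega
      rw [alphaW]
      simp only [hBf, Finset.erase_eq_of_notMem hnm, ← ht]
      ring
  -- bounds on Bf
  have hBfbound : ∀ i, i < r → 0 ≤ Bf i ∧ Bf i ≤ K₀ := by
    intro i hi
    have h1 := hbound1 i ((Finset.Icc (i+1) (r-1)).erase l₀) hi (Finset.erase_subset _ _)
      (Finset.notMem_erase _ _)
    have h2 := hbound2 i hi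
    constructor
    · simp only [hBf]
      have : 0 ≤ (h ^ t)⁻¹ * ((∑ l ∈ (Finset.Icc (i+1) (r-1)).erase l₀,
          C1 r l i * Jf h x₀ j r f (l:ℤ)) +
          ∑ l ∈ Finset.range i, C1 r (r-l-1) (r-1-i) * Jf h x₀ j r f ((l:ℤ)-(r:ℤ)+1)) := by
        apply mul_nonneg (by positivity)
        linarith [h1.1, h2.1]
      linarith [hCoptnn i]
    · simp only [hBf]
      have hsums : (∑ l ∈ (Finset.Icc (i+1) (r-1)).erase l₀,
          C1 r l i * Jf h x₀ j r f (l:ℤ)) +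
          (∑ l ∈ Finset.range i, C1 r (r-l-1) (r-1-i) * Jf h x₀ j r f ((l:ℤ)-(r:ℤ)+1))
          ≤ 2 * (r:ℝ) * (Cb * (L * h) ^ T) := by
        linarith [h1.2, h2.2]
      have hstep : (h ^ t)⁻¹ * ((∑ l ∈ (Finset.Icc (i+1) (r-1)).erase l₀,
          C1 r l i * Jf h x₀ j r f (l:ℤ)) +
          (∑ l ∈ Finset.range i, C1 r (r-l-1) (r-1-i) * Jf h x₀ j r f ((l:ℤ)-(r:ℤ)+1)))
          ≤ (h ^ t)⁻¹ * (2 * (r:ℝ) * (Cb * (L * h) ^ T)) :=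
        mul_le_mul_of_nonneg_left hsums (by positivity)
      have hval : (h ^ t)⁻¹ * (2 * (r:ℝ) * (Cb * (L * h) ^ T))
          = 2 * (r:ℝ) * Cb * L ^ T * h ^ t := by
        rw [mul_pow]
        calc (h ^ t)⁻¹ * (2 * (r:ℝ) * (Cb * (L ^ T * h ^ T)))
            = 2 * (r:ℝ) * Cb * L ^ T * ((h ^ t)⁻¹ * h ^ T) := by ring
          _ = 2 * (r:ℝ) * Cb * L ^ T * h ^ t := by rw [hexp]
      have hfin : 2 * (r:ℝ) * Cb * L ^ T * h ^ t ≤ 2 * (r:ℝ) * Cb * L ^ T := by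
        have hnn : (0:ℝ) ≤ 2 * (r:ℝ) * Cb * L ^ T := by positivity
        nlinarith [hhtle1, hht.le]
      have := hCoptle i hi
      rw [hK₀]
      linarith
  -- the sum of alphas
  set S : ℝ := ∑ i ∈ Finset.range r, alphaW h x₀ j r f i with hS
  set SB : ℝ := ∑ i ∈ Finset.range r, Bf i with hSB
  clear_value S SB
  have hSBnn : 0 ≤ SB := by
    rw [hSB]
    exact Finset.sum_nonneg fun i hi => (hBfbound i (Finset.mem_range.1 hi)).1
  have hSBle : SB ≤ (r:ℝ) * K₀ := by
    rw [hSB]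
    calc (∑ i ∈ Finset.range r, Bf i) ≤ ∑ _i ∈ Finset.range r, K₀ :=
          Finset.sum_le_sum fun i hi => (hBfbound i (Finset.mem_range.1 hi)).2
      _ = (r:ℝ) * K₀ := by rw [Finset.sum_const, nsmul_eq_mul, Finset.card_range]
  have hcsum : ∑ i ∈ Finset.range r, (if i < l₀ then c i else 0) = 1 := by
    rw [← Finset.sum_filter]
    have : (Finset.range r).filter (· < l₀) = Finset.range l₀ := by
      ext x
      simp only [Finset.mem_filter, Finset.mem_range]
      omega
    rw [this]
    simp only [hc]
    exact C1_sum r l₀ hl₀1 (by omega)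
  have hSsum : S = A + SB := by
    rw [hS, hSB, Finset.sum_congr rfl (fun i hi => hsplit i (Finset.mem_range.1 hi)),
        Finset.sum_add_distrib, ← Finset.sum_mul, hcsum, one_mul]
  have hSpos : 0 < S := by rw [hSsum]; linarith
  have hAleS : A ≤ S := by rw [hSsum]; linarith
  have hinvS : 1 / S ≤ h ^ t / m ^ T := by
    rw [div_le_div_iff₀ hSpos hmT]
    have h1 : m ^ T * (h ^ t)⁻¹ * h ^ t ≤ S * h ^ t :=
      mul_le_mul_of_nonneg_right (le_trans hAlow hAleS) hht.le
    have h2 : m ^ T * (h ^ t)⁻¹ * h ^ t = m ^ T := by field_simp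
    linarith
  -- conclusion
  constructor
  · -- k ≤ l₀ - 1
    intro k hk
    have hkl : k < l₀ := by omega
    have hkr : k < r := by omega
    have hcknn : 0 ≤ c k := by
      simp only [hc]; exact C1_nonneg r l₀ k (by omega) (by omega)
    have hckb : c k ≤ Cb := by
      simp only [hc]; exact hC1le l₀ k (by omega) (by omega)
    have hωeq : omegaW h x₀ j r f k - C1 r l₀ k = (Bf k - c k * SB) / S := by
      rw [omegaW, ← hS, hsplit k hkr, if_pos hkl]
      rw [div_sub' hSpos.ne']
      congr 1
      rw [hSsum]
      simp only [hc]
      ring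
    rw [hωeq, abs_div, abs_of_pos hSpos]
    have hnum : |Bf k - c k * SB| ≤ K₀ + Cb * (r:ℝ) * ((r:ℝ) * K₀) := by
      have hb := hBfbound k hkr
      have h1 : |Bf k| ≤ K₀ := by rw [abs_of_nonneg hb.1]; exact hb.2
      have h2 : |c k * SB| ≤ Cb * ((r:ℝ) * K₀) := by
        rw [abs_of_nonneg (mul_nonneg hcknn hSBnn)]
        exact mul_le_mul hckb hSBle hSBnn hCbpos.le
      calc |Bf k - c k * SB| ≤ |Bf k| + |c k * SB| := abs_sub _ _
        _ ≤ K₀ + Cb * ((r:ℝ) * K₀) := by linarith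
        _ ≤ K₀ + Cb * (r:ℝ) * ((r:ℝ) * K₀) := by
            have h1r : (1:ℝ) ≤ (r:ℝ) := by exact_mod_cast Nat.one_le_iff_ne_zero.2 (by omega)
            have hCbr : Cb ≤ Cb * (r:ℝ) := le_mul_of_one_le_right hCbpos.le h1r
            have := mul_le_mul_of_nonneg_right hCbr
              (mul_nonneg (Nat.cast_nonneg r) hK₀nn)
            linarith
    have habsnn : (0:ℝ) ≤ |Bf k - c k * SB| := abs_nonneg _
    calc |Bf k - c k * SB| / S = |Bf k - c k * SB| * (1/S) := by ring
      _ ≤ (K₀ + Cb * (r:ℝ) * ((r:ℝ) * K₀)) * (h ^ t / m ^ T) := by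
          apply mul_le_mul hnum hinvS (by positivity) (by linarith)
      _ = ((K₀ + Cb * (r:ℝ) * ((r:ℝ) * K₀)) / m ^ T) * h ^ t := by ring
      _ ≤ M * h ^ t := by
          apply mul_le_mul_of_nonneg_right _ hht.le
          rw [hM]
          linarith
  · -- l₀ ≤ k ≤ r-1
    intro k hk1 hk2
    have hkr : k < r := by omega
    have hωeq : omegaW h x₀ j r f k = Bf k / S := by
      rw [omegaW, ← hS, hsplit k hkr, if_neg (by omega), zero_mul, zero_add]
    have hb := hBfbound k hkr
    constructor
    · rw [hωeq]
      exact div_nonneg hb.1 hSpos.le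
    · rw [hωeq]
      calc Bf k / S = Bf k * (1/S) := by ring
        _ ≤ K₀ * (h ^ t / m ^ T) := by
            apply mul_le_mul hb.2 hinvS (by positivity) hK₀nn
        _ = (K₀ / m ^ T) * h ^ t := by ring
        _ ≤ M * h ^ t := by
            apply mul_le_mul_of_nonneg_right _ hht.le
            rw [hM]
            have h1r : (1:ℝ) ≤ (r:ℝ) := by exact_mod_cast Nat.one_le_iff_ne_zero.2 (by omega)
            have hrnn : (0:ℝ) ≤ (r:ℝ) := Nat.cast_nonneg r
            have hX : 0 ≤ Cb * (r:ℝ) * ((r:ℝ) * K₀) :=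
              mul_nonneg (mul_nonneg hCbpos.le hrnn) (mul_nonneg hrnn hK₀nn)
            have : K₀ / m ^ T ≤ (K₀ + Cb * (r:ℝ) * ((r:ℝ) * K₀)) / m ^ T :=
              (div_le_div_iff_of_pos_right hmT).mpr (by linarith)
            linarith
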